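/- For even N ≥ 2 and every n ∈ ℕ, the function ρ^{(n)}(x) = B_{2n}(x/2 + 1/2) satisfies the eigenvalue equation N^{2n−1}·Σ_{k=0}^{N−1} ρ^{(n)}((y + c_k)/N) = ρ^{(n)}(y) for all y ∈ [0,1], where the preimages are (1−y)/N, (1+y)/N, (3−y)/N, (3+y)/N, ..., ((N−1)−y)/N, ((N−1)+y)/N; i.e. N^{2n−1}·[ρ^{(n)}((1−y)/N) + ρ^{(n)}((1+y)/N) + ... + ρ^{(n)}((y+N−1)/N)] = ρ^{(n)}(y). -/

import Mathlib

open Polynomial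

/-- The real Bernoulli polynomial. -/
noncomputable def bernR (m : ℕ) : Polynomial ℝ :=
  (Polynomial.bernoulli m).map (algebraMap ℚ ℝ)

lemma bernR_eval (m : ℕ) (x : ℝ) :
    (bernR m).eval x = Polynomial.aeval x (Polynomial.bernoulli m) := by
  rw [bernR, eval_map, aeval_def]

/-- Shift identity as a polynomial identity over ℚ. -/
lemma bernoulli_comp_add_one (m : ℕ) :
    (Polynomial.bernoulli m).comp (X + 1) =
      Polynomial.bernoulli m + C (m : ℚ) * X ^ (m - 1) := by
  apply Polynomial.funext
  intro x
  simp [eval_comp, Polynomial.bernoulli_eval_one_add, add_comm x 1]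

/-- Shift identity over ℝ. -/
lemma bernR_comp_add_one (m : ℕ) :
    (bernR m).comp (X + 1) = bernR m + C (m : ℝ) * X ^ (m - 1) := by
  have := congrArg (fun p => p.map (algebraMap ℚ ℝ)) (bernoulli_comp_add_one m)
  simpa [bernR, Polynomial.map_comp, map_C] using this

lemma bernR_derivative (m : ℕ) :
    derivative (bernR (m + 1)) = C ((m : ℝ) + 1) * bernR m := by
  have h := Polynomial.derivative_bernoulli_add_one m
  rw [bernR, bernR, derivative_map, h, Polynomial.map_mul]
  congr 1
  simp [Polynomial.map_add, Polynomial.map_natCast, Polynomial.map_one, C_eq_natCast]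

/-- A real polynomial invariant under a nonzero shift is constant. -/
lemma const_of_comp_add (p : Polynomial ℝ) (a : ℝ) (ha : a ≠ 0)
    (hp : p.comp (X + C a) = p) : p = C (p.eval 0) := by
  have h1 : ∀ x : ℝ, p.eval (x + a) = p.eval x := by
    intro x
    conv_rhs => rw [← hp]
    simp [eval_comp]
  have h2 : ∀ j : ℕ, p.eval (j * a) = p.eval 0 := by
    intro j
    induction j with
    | zero => simp
    | succ j ih => push_cast; rw [add_mul, one_mul, h1, ih]
  have hroots : {x : ℝ | (p - C (p.eval 0)).IsRoot x}.Infinite := by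
    apply Set.Infinite.mono (s := Set.range fun j : ℕ => (j : ℝ) * a)
    · rintro x ⟨j, rfl⟩
      simp [IsRoot, h2 j]
    · apply Set.infinite_range_of_injective
      intro i j hij
      field_simp at hij
      exact_mod_cast hij
  have := Polynomial.eq_zero_of_infinite_isRoot _ hroots
  linear_combination (norm := ring_nf) this

/-- General shift: `B_m(q+1) = B_m(q) + m q^{m-1}` as polynomials. -/
lemma bernR_comp_add_one' (m : ℕ) (q : Polynomial ℝ) :
    (bernR m).comp (q + 1) = (bernR m).comp q + C (m : ℝ) * q ^ (m - 1) := by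
  have := congrArg (fun p => p.comp q) (bernR_comp_add_one m)
  simpa [comp_assoc, add_comp, mul_comp, C_comp, X_comp, pow_comp, one_comp] using this

/-- The "multiplication theorem defect" polynomial. -/
noncomputable def Dber (N m : ℕ) : Polynomial ℝ :=
  C (N : ℝ) * (bernR m).comp (C (N : ℝ) * X) -
    C ((N : ℝ) ^ m) * ∑ k ∈ Finset.range N, (bernR m).comp (X + C ((k : ℝ) / N))

lemma Dber_periodic (N m : ℕ) (hN : 0 < N) :
    (Dber N m).comp (X + C ((N : ℝ)⁻¹)) = Dber N m := by
  have hN0 : (N : ℝ) ≠ 0 := Nat.cast_ne_zero.mpr hN.ne'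
  set f : ℕ → Polynomial ℝ := fun k => (bernR m).comp (X + C ((k : ℝ) / N)) with hf
  have e1 : (C (N:ℝ) * X).comp (X + C (N:ℝ)⁻¹) = C (N:ℝ) * X + 1 := by
    rw [mul_comp, C_comp, X_comp, mul_add, ← C_mul, mul_inv_cancel₀ hN0, C_1]
  have e2 : ∀ k : ℕ, (X + C ((k:ℝ)/N)).comp (X + C (N:ℝ)⁻¹) = X + C (((k:ℝ)+1)/N) := by
    intro k
    rw [add_comp, X_comp, C_comp, add_assoc, ← C_add]
    congr 2
    field_simp
    ring
  have hsum : ∑ k ∈ Finset.range N, f (k + 1)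
      = (∑ k ∈ Finset.range N, f k) + C (m:ℝ) * X ^ (m - 1) := by
    have h1 := Finset.sum_range_succ' f N
    have h2 := Finset.sum_range_succ f N
    have hf0 : f 0 = bernR m := by simp [hf]
    have hfN : f N = bernR m + C (m:ℝ) * X ^ (m - 1) := by
      have hd : ((N:ℝ)/N) = 1 := div_self hN0
      have := bernR_comp_add_one' m X
      simp only [hf, hd, C_1]
      simpa using this
    have := h1.symm.trans h2
    rw [hf0, hfN] at this
    linear_combination this
  have hextra : C (N:ℝ) * (C (m:ℝ) * (C (N:ℝ) * X) ^ (m-1))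
      = C ((N:ℝ)^m) * (C (m:ℝ) * X ^ (m-1)) := by
    cases m with
    | zero => simp
    | succ m =>
      rw [Nat.succ_sub_one, mul_pow, ← C_pow, pow_succ', C_mul]
      ring
  calc (Dber N m).comp (X + C (N:ℝ)⁻¹)
      = C (N:ℝ) * (bernR m).comp ((C (N:ℝ) * X).comp (X + C (N:ℝ)⁻¹))
        - C ((N:ℝ)^m) * ∑ k ∈ Finset.range N,
            (bernR m).comp ((X + C ((k:ℝ)/N)).comp (X + C (N:ℝ)⁻¹)) := by
        simp [Dber, sub_comp, mul_comp, sum_comp, comp_assoc]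
    _ = C (N:ℝ) * ((bernR m).comp (C (N:ℝ) * X) + C (m:ℝ) * (C (N:ℝ) * X) ^ (m-1))
        - C ((N:ℝ)^m) * ∑ k ∈ Finset.range N, f (k + 1) := by
        rw [e1, bernR_comp_add_one']
        congr 1
        congr 1
        refine Finset.sum_congr rfl fun k _ => ?_
        rw [e2 k]
        simp [hf]
    _ = Dber N m := by
        rw [hsum, Dber]
        rw [mul_add, mul_add, hextra]
        ring

lemma Dber_derivative (N m : ℕ) :
    derivative (Dber N (m + 1)) = C (((m : ℝ) + 1) * N) * Dber N m := by
  have h1 : derivative (C (N:ℝ) * (bernR (m+1)).comp (C (N:ℝ) * X))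
      = C (((m:ℝ)+1) * N) * (C (N:ℝ) * (bernR m).comp (C (N:ℝ) * X)) := by
    rw [derivative_C_mul, derivative_comp, bernR_derivative]
    simp only [derivative_mul, derivative_C, derivative_X, zero_mul, zero_add, mul_one,
      mul_comp, C_comp, C_mul]
    ring
  have h2 : derivative (C ((N:ℝ)^(m+1)) *
        ∑ k ∈ Finset.range N, (bernR (m+1)).comp (X + C ((k:ℝ)/N)))
      = C (((m:ℝ)+1) * N) *
        (C ((N:ℝ)^m) * ∑ k ∈ Finset.range N, (bernR m).comp (X + C ((k:ℝ)/N))) := by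
    rw [derivative_C_mul, derivative_sum, Finset.mul_sum, Finset.mul_sum, Finset.mul_sum]
    refine Finset.sum_congr rfl fun k _ => ?_
    rw [derivative_comp, bernR_derivative]
    simp only [derivative_add, derivative_C, derivative_X, add_zero, one_mul,
      mul_comp, C_comp, C_mul, pow_succ]
    ring
  rw [Dber, derivative_sub, h1, h2, Dber, mul_sub]

lemma Dber_zero (N m : ℕ) (hN : 0 < N) : Dber N m = 0 := by
  have hN0 : (N : ℝ) ≠ 0 := Nat.cast_ne_zero.mpr hN.ne'
  have hconst := const_of_comp_add (Dber N (m + 1)) ((N:ℝ)⁻¹) (inv_ne_zero hN0)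
    (Dber_periodic N (m + 1) hN)
  have hd : derivative (Dber N (m + 1)) = 0 := by rw [hconst]; simp
  rw [Dber_derivative] at hd
  have hC : (C (((m : ℝ) + 1) * N) : Polynomial ℝ) ≠ 0 := by
    simp only [ne_eq, C_eq_zero]
    positivity
  exact (mul_eq_zero.mp hd).resolve_left hC

/-- Multiplication theorem, evaluated form over ℝ. -/
lemma bern_mult (N m : ℕ) (hN : 0 < N) (x : ℝ) :
    (N : ℝ) * (bernR m).eval ((N : ℝ) * x)
      = (N : ℝ) ^ m * ∑ k ∈ Finset.range N, (bernR m).eval (x + (k : ℝ) / N) := by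
  have h := congrArg (fun p => Polynomial.eval x p) (Dber_zero N m hN)
  simpa [Dber, eval_comp, eval_finset_sum, sub_eq_zero] using h

/-- The "reflection defect" polynomial. -/
noncomputable def Gber (m : ℕ) : Polynomial ℝ :=
  (bernR m).comp (C 1 - X) - C ((-1 : ℝ) ^ m) * bernR m

lemma Gber_periodic (m : ℕ) : (Gber m).comp (X + C (1:ℝ)) = Gber m := by
  have hrefl : (bernR m).comp (C 1 - X)
      = (bernR m).comp (-X) + C (m:ℝ) * (-X) ^ (m - 1) := by
    have h := bernR_comp_add_one' m (-X)
    have h' : -X + 1 = (C 1 - X : Polynomial ℝ) := by rw [C_1]; ring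
    rw [h'] at h
    exact h
  have hshift : (bernR m).comp (X + C (1:ℝ)) = bernR m + C (m:ℝ) * X ^ (m - 1) := by
    have := bernR_comp_add_one' m X
    simpa using this
  have e1 : (C (1:ℝ) - X).comp (X + C (1:ℝ)) = -X := by
    rw [sub_comp, C_comp, X_comp]; ring
  have hneg : (C (m:ℝ) : Polynomial ℝ) * (-X) ^ (m - 1)
      = - (C ((-1:ℝ)^m) * (C (m:ℝ) * X ^ (m - 1))) := by
    cases m with
    | zero => simp
    | succ m =>
      rw [Nat.succ_sub_one, neg_pow]
      simp only [pow_succ, C_mul, C_pow, C_neg, C_1]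
      ring
  calc (Gber m).comp (X + C (1:ℝ))
      = (bernR m).comp ((C (1:ℝ) - X).comp (X + C (1:ℝ)))
        - C ((-1:ℝ)^m) * (bernR m).comp (X + C (1:ℝ)) := by
        simp [Gber, sub_comp, mul_comp, comp_assoc]
    _ = ((bernR m).comp (C 1 - X) - C (m:ℝ) * (-X) ^ (m - 1))
        - C ((-1:ℝ)^m) * (bernR m + C (m:ℝ) * X ^ (m - 1)) := by
        rw [e1, hshift]
        congr 1
        rw [hrefl]; ring
    _ = Gber m := by rw [Gber, hneg]; ring

lemma Gber_derivative (m : ℕ) :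
    derivative (Gber (m + 1)) = C (-((m:ℝ) + 1)) * Gber m := by
  rw [Gber, Gber, derivative_sub, derivative_comp, bernR_derivative, derivative_C_mul,
    bernR_derivative]
  simp only [derivative_sub, derivative_C, derivative_X, derivative_one, zero_sub,
    mul_comp, C_comp, pow_succ, C_mul, C_neg, C_1]
  ring

lemma Gber_zero (m : ℕ) : Gber m = 0 := by
  have hconst := const_of_comp_add (Gber (m + 1)) 1 one_ne_zero (Gber_periodic (m + 1))
  have hd : derivative (Gber (m + 1)) = 0 := by rw [hconst]; simp
  rw [Gber_derivative] at hd
  have hC : (C (-((m:ℝ) + 1)) : Polynomial ℝ) ≠ 0 := by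
    simp only [ne_eq, C_eq_zero, neg_eq_zero]
    positivity
  exact (mul_eq_zero.mp hd).resolve_left hC

/-- Reflection formula, evaluated form. -/
lemma bern_reflect (m : ℕ) (x : ℝ) :
    (bernR m).eval (1 - x) = (-1 : ℝ) ^ m * (bernR m).eval x := by
  have h := congrArg (fun p => Polynomial.eval x p) (Gber_zero m)
  simpa [Gber, eval_comp, sub_eq_zero] using h

/-- For even `N ≥ 2`, the function `ρ⁽ⁿ⁾(x) = B_{2n}(x/2 + 1/2)` (with `B_m` the
`m`-th Bernoulli polynomial) is an eigenfunction of the Perron–Frobenius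
operator of the multi-upside-down tent map of slope `±N` with eigenvalue
`N^{-2n}`: summing over the `N` preimages `(1∓y)/N, (3∓y)/N, ...`  gives
`N^{2n-1} · Σ = ρ⁽ⁿ⁾(y)`. -/
theorem bernoulli_eigenfunction_even (N : ℕ) (hN : 2 ≤ N) (hNeven : Even N)
    (n : ℕ) (y : ℝ) (hy : y ∈ Set.Icc (0 : ℝ) 1) :
    (N : ℝ) ^ (2 * (n : ℤ) - 1) *
        ∑ j ∈ Finset.range (N / 2),
          ((Polynomial.aeval ((((2 * j + 1 : ℝ) - y) / N) / 2 + 1 / 2)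
              (Polynomial.bernoulli (2 * n)) : ℝ) +
            (Polynomial.aeval ((((2 * j + 1 : ℝ) + y) / N) / 2 + 1 / 2)
              (Polynomial.bernoulli (2 * n)) : ℝ)) =
      (Polynomial.aeval (y / 2 + 1 / 2) (Polynomial.bernoulli (2 * n)) : ℝ) := by

  have hNpos : 0 < N := by omega
  have hN0 : (N : ℝ) ≠ 0 := Nat.cast_ne_zero.mpr hNpos.ne'
  obtain ⟨M, hM⟩ := hNeven
  have hMpos : 0 < M := by omega
  have hM0 : (M : ℝ) ≠ 0 := Nat.cast_ne_zero.mpr hMpos.ne'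
  have hM2 : (N : ℝ) = 2 * M := by rw [hM]; push_cast; ring
  have hMN : N / 2 = M := by omega
  set m := 2 * n with hm
  set x : ℝ := (y + 1) / (2 * N) with hx
  have hmult := bern_mult N m hNpos x
  have hNx : (N : ℝ) * x = y / 2 + 1 / 2 := by rw [hx]; field_simp
  have hsplit : ∑ k ∈ Finset.range N, (bernR m).eval (x + (k : ℝ) / N)
      = ∑ j ∈ Finset.range (N / 2),
          ((Polynomial.aeval ((((2 * j + 1 : ℝ) - y) / N) / 2 + 1 / 2)
              (Polynomial.bernoulli m) : ℝ) +
            (Polynomial.aeval ((((2 * j + 1 : ℝ) + y) / N) / 2 + 1 / 2)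
              (Polynomial.bernoulli m) : ℝ)) := by
    rw [hMN, show Finset.range N = Finset.range (M + M) from by rw [hM],
      Finset.sum_range_add, Finset.sum_add_distrib]
    congr 1
    · rw [← Finset.sum_range_reflect]
      refine Finset.sum_congr rfl fun j hj => ?_
      rw [Finset.mem_range] at hj
      have hcast : ((M - 1 - j : ℕ) : ℝ) = (M : ℝ) - 1 - j := by
        have h' : (M - 1 - j) + (j + 1) = M := by omega
        have h'' := congrArg (fun t : ℕ => (t : ℝ)) h'
        push_cast at h''
        linarith
      have harg : x + ((M - 1 - j : ℕ) : ℝ) / N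
          = 1 - ((((2 * j + 1 : ℝ) - y) / N) / 2 + 1 / 2) := by
        rw [hcast, hx, hM2]
        field_simp
        ring
      rw [harg, bern_reflect, ← bernR_eval]
      have hpow : ((-1 : ℝ)) ^ m = 1 := by rw [hm, pow_mul]; norm_num
      rw [hpow, one_mul]
    · refine Finset.sum_congr rfl fun j hj => ?_
      have harg : x + ((M + j : ℕ) : ℝ) / N
          = (((2 * j + 1 : ℝ) + y) / N) / 2 + 1 / 2 := by
        rw [hx, hM2]
        push_cast
        field_simp
        ring
      rw [harg, bernR_eval]
  rw [← hsplit]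
  have hgoalR : (Polynomial.aeval (y / 2 + 1 / 2) (Polynomial.bernoulli m) : ℝ)
      = (bernR m).eval ((N : ℝ) * x) := by rw [hNx, bernR_eval]
  rw [hgoalR]
  have hexp : (2 * (n : ℤ)) = ((m : ℕ) : ℤ) := by rw [hm]; push_cast; ring
  have hzpow : (N : ℝ) ^ (2 * (n : ℤ) - 1) = (N : ℝ) ^ m / N := by
    rw [zpow_sub₀ hN0, zpow_one, hexp, zpow_natCast]
  rw [hzpow, div_mul_eq_mul_div, ← hmult, mul_comm, mul_div_assoc, div_self hN0, mul_one]
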